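/- arXiv:1510.03191 — 4 statements merged into one kernel-verified Lean document; each statement's English description precedes it below -/
import Mathlib

section
/- Capacity of the two-hop half-duplex relay channel (Theorem 1): in the half-duplex two-hop relay setting, sup over joint PMFs p on X1 × X2 of min{ I(X1;Y1|X2), I(X2;Y2) } equals sup over P ∈ [0,1] of min{ (1 − P)·C1 , g(P) }, where C1 := max over PMFs q on X1 of I(q, W1(·|·,0)) and g(P) := sup over PMFs v on X2 with v(0) = 0 of I( (1−P)·δ0 + P·v , W2 ), with δ0 the point mass at 0 ∈ X2. -/
open Finset

/-- Mutual information `I(p, W)` (in bits) of a finite input distribution `p` and a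
channel `W`, with the convention that terms with `p a * W a b = 0` contribute `0`. -/
noncomputable def mutInfo {A B : Type*} [Fintype A] [Fintype B]
    (p : A → ℝ) (W : A → B → ℝ) : ℝ :=
  ∑ a, ∑ b, if p a * W a b = 0 then 0
    else p a * W a b * Real.logb 2 (W a b / ∑ a', p a' * W a' b)

/-- `p` is a probability mass function on the finite type `A`. -/
def IsPMF {A : Type*} [Fintype A] (p : A → ℝ) : Prop :=
  (∀ a, 0 ≤ p a) ∧ ∑ a, p a = 1

/-- The `X2`-marginal of a joint PMF on `X1 × X2`. -/
noncomputable def marg2 {X1 X2 : Type*} [Fintype X1] (p : X1 × X2 → ℝ) : X2 → ℝ :=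
  fun x2 => ∑ x1, p (x1, x2)

/-- The conditional mutual information `I(X1; Y1 | X2)` for a joint PMF `p` on `X1 × X2`
and source-relay channel `W1`. -/
noncomputable def condMI {X1 X2 Y1 : Type*} [Fintype X1] [Fintype X2] [Fintype Y1]
    (p : X1 × X2 → ℝ) (W1 : X1 → X2 → Y1 → ℝ) : ℝ :=
  ∑ x2, if 0 < marg2 p x2 then
      marg2 p x2 * mutInfo (fun x1 => p (x1, x2) / marg2 p x2) (fun x1 => W1 x1 x2)
    else 0

section AuxLemmas

set_option linter.unusedSectionVars false
set_option linter.unusedVariables false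

/-- Mutual information through a deterministic channel that ignores the input is zero. -/
lemma mutInfo_det {A Y : Type*} [Fintype A] [Fintype Y] [DecidableEq Y] (y0 : Y)
    (p : A → ℝ) (hp : ∑ a, p a = 1) :
    mutInfo p (fun _ y => if y = y0 then (1:ℝ) else 0) = 0 := by
  unfold mutInfo
  refine Finset.sum_eq_zero fun a _ => Finset.sum_eq_zero fun y _ => ?_
  by_cases hy : y = y0
  · subst hy
    simp [hp]
  · simp [hy]

/-- Mutual information with a point-mass input distribution is zero. -/
lemma mutInfo_pointmass {A B : Type*} [Fintype A] [Fintype B] [DecidableEq A]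
    (a0 : A) (W : A → B → ℝ) :
    mutInfo (fun a => if a = a0 then (1:ℝ) else 0) W = 0 := by
  unfold mutInfo
  refine Finset.sum_eq_zero fun a _ => Finset.sum_eq_zero fun b _ => ?_
  by_cases ha : a = a0
  · subst ha
    rw [show (∑ a', (if a' = a then (1:ℝ) else 0) * W a' b) = W a b by simp]
    by_cases h : W a b = 0
    · simp [h]
    · simp [h, div_self h]
  · simp [ha]

/-- A crude universal upper bound on mutual information. -/
lemma mutInfo_le {A B : Type*} [Fintype A] [Fintype B]
    (p : A → ℝ) (hp : IsPMF p) (W : A → B → ℝ) (hW : ∀ a, IsPMF (W a)) :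
    mutInfo p W ≤ 2 * Fintype.card A := by
  have key : ∀ a : A, (∑ b, if p a * W a b = 0 then 0
      else p a * W a b * Real.logb 2 (W a b / ∑ a', p a' * W a' b)) ≤ 2 := by
    intro a
    have hpa0 : 0 ≤ p a := hp.1 a
    have hpa1 : p a ≤ 1 := by
      rw [← hp.2]
      exact Finset.single_le_sum (fun a' _ => hp.1 a') (mem_univ a)
    have step1 : ∀ b : B, (if p a * W a b = 0 then 0
        else p a * W a b * Real.logb 2 (W a b / ∑ a', p a' * W a' b))
        ≤ p a * W a b * Real.logb 2 (p a)⁻¹ := by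
      intro b
      by_cases h : p a * W a b = 0
      · rw [if_pos h, h, zero_mul]
      · rw [if_neg h]
        have hpa : 0 < p a := lt_of_le_of_ne hpa0 (fun e => h (by rw [← e, zero_mul]))
        have hw : 0 < W a b := lt_of_le_of_ne ((hW a).1 b)
          (fun e => h (by rw [← e, mul_zero]))
        have hS : p a * W a b ≤ ∑ a', p a' * W a' b :=
          Finset.single_le_sum (fun a' _ => mul_nonneg (hp.1 a') ((hW a').1 b)) (mem_univ a)
        have hSpos : 0 < ∑ a', p a' * W a' b := lt_of_lt_of_le (by positivity) hS
        have hdiv : W a b / (∑ a', p a' * W a' b) ≤ (p a)⁻¹ := by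
          rw [div_le_iff₀ hSpos]
          calc W a b = (p a)⁻¹ * (p a * W a b) := by field_simp
          _ ≤ (p a)⁻¹ * (∑ a', p a' * W a' b) :=
            mul_le_mul_of_nonneg_left hS (by positivity)
        have hlogb : Real.logb 2 (W a b / ∑ a', p a' * W a' b) ≤ Real.logb 2 (p a)⁻¹ :=
          (Real.logb_le_logb one_lt_two (by positivity) (by positivity)).mpr hdiv
        exact mul_le_mul_of_nonneg_left hlogb (by positivity)
    calc (∑ b, if p a * W a b = 0 then 0
        else p a * W a b * Real.logb 2 (W a b / ∑ a', p a' * W a' b))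
        ≤ ∑ b, p a * W a b * Real.logb 2 (p a)⁻¹ := Finset.sum_le_sum fun b _ => step1 b
      _ = p a * Real.logb 2 (p a)⁻¹ := by
          rw [← Finset.sum_mul, ← Finset.mul_sum, (hW a).2, mul_one]
      _ ≤ 2 := by
          by_cases hpa : p a = 0
          · simp [hpa]
          · have hpa' : 0 < p a := lt_of_le_of_ne hpa0 (Ne.symm hpa)
            have hlog : Real.log (p a)⁻¹ ≤ (p a)⁻¹ - 1 :=
              Real.log_le_sub_one_of_pos (by positivity)
            have h2 : p a * Real.log (p a)⁻¹ ≤ 1 := by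
              have := mul_le_mul_of_nonneg_left hlog hpa0
              have hinv : p a * (p a)⁻¹ = 1 := mul_inv_cancel₀ hpa
              nlinarith
            have hl2 : (0.6931471803 : ℝ) < Real.log 2 := Real.log_two_gt_d9
            rw [Real.logb, mul_div_assoc', div_le_iff₀ (by linarith)]
            nlinarith
  calc mutInfo p W ≤ ∑ _a : A, (2:ℝ) := Finset.sum_le_sum fun a _ => key a
    _ = 2 * Fintype.card A := by simp [mul_comm]

variable {X1 X2 Y1 : Type*} [Fintype X1] [Fintype X2] [Fintype Y1]
  [DecidableEq X2] [DecidableEq Y1]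

lemma marg2_nonneg (p : X1 × X2 → ℝ) (hp : IsPMF p) (x2 : X2) : 0 ≤ marg2 p x2 :=
  Finset.sum_nonneg fun x1 _ => hp.1 _

lemma marg2_sum (p : X1 × X2 → ℝ) (hp : IsPMF p) : ∑ x2, marg2 p x2 = 1 := by
  rw [← hp.2, Fintype.sum_prod_type]
  exact Finset.sum_comm

lemma marg2_isPMF (p : X1 × X2 → ℝ) (hp : IsPMF p) : IsPMF (marg2 p) :=
  ⟨marg2_nonneg p hp, marg2_sum p hp⟩

lemma cond_sum (p : X1 × X2 → ℝ) (x2 : X2) (h : marg2 p x2 ≠ 0) :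
    ∑ x1, p (x1, x2) / marg2 p x2 = 1 := by
  rw [← Finset.sum_div]
  exact div_self h

lemma condMI_eq (x0 : X2) (y0 : Y1) (p : X1 × X2 → ℝ) (hp : IsPMF p)
    (W1 : X1 → X2 → Y1 → ℝ)
    (hHD : ∀ x1 x2, x2 ≠ x0 → W1 x1 x2 = fun y1 => if y1 = y0 then 1 else 0) :
    condMI p W1 = (if 0 < marg2 p x0 then
      marg2 p x0 * mutInfo (fun x1 => p (x1, x0) / marg2 p x0) (fun x1 => W1 x1 x0)
      else 0) := by
  unfold condMI
  refine Finset.sum_eq_single_of_mem x0 (mem_univ x0) fun x2 _ hx2 => ?_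
  by_cases h : 0 < marg2 p x2
  · rw [if_pos h]
    have hch : (fun x1 => W1 x1 x2) = fun _ y => if y = y0 then (1:ℝ) else 0 := by
      funext x1; exact hHD x1 x2 hx2
    rw [hch, mutInfo_det y0 _ (cond_sum p x2 (ne_of_gt h)), mul_zero]
  · rw [if_neg h]

lemma marg2_prod (m : X2 → ℝ) (q : X1 → ℝ) (hq : ∑ x1, q x1 = 1) :
    marg2 (fun x : X1 × X2 => m x.2 * q x.1) = m := by
  funext x2
  show ∑ x1, m x2 * q x1 = m x2
  rw [← Finset.mul_sum, hq, mul_one]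

lemma prod_isPMF (m : X2 → ℝ) (hm : IsPMF m) (q : X1 → ℝ) (hq : IsPMF q) :
    IsPMF (fun x : X1 × X2 => m x.2 * q x.1) := by
  constructor
  · exact fun x => mul_nonneg (hm.1 _) (hq.1 _)
  · calc ∑ a : X1 × X2, (fun x : X1 × X2 => m x.2 * q x.1) a
        = ∑ x1, ∑ x2, m x2 * q x1 := by rw [Fintype.sum_prod_type]
      _ = ∑ x1 : X1, (∑ x2, m x2) * q x1 := by simp_rw [Finset.sum_mul]
      _ = 1 := by rw [hm.2]; simp [hq.2]

lemma mix_isPMF (x0 : X2) (P : ℝ) (hP0 : 0 ≤ P) (hP1 : P ≤ 1)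
    (v : X2 → ℝ) (hv : IsPMF v) :
    IsPMF (fun x2 => (1-P) * (if x2 = x0 then (1:ℝ) else 0) + P * v x2) := by
  constructor
  · intro a
    have h1 : (0:ℝ) ≤ (if a = x0 then (1:ℝ) else 0) := by split <;> norm_num
    have h2 := mul_nonneg (by linarith : (0:ℝ) ≤ 1 - P) h1
    have h3 := mul_nonneg hP0 (hv.1 a)
    exact add_nonneg h2 h3
  · show ∑ a, ((1-P) * (if a = x0 then (1:ℝ) else 0) + P * v a) = 1
    rw [Finset.sum_add_distrib, ← Finset.mul_sum, ← Finset.mul_sum, hv.2]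
    simp

lemma unif_isPMF {A : Type*} [Fintype A] [Nonempty A] :
    IsPMF (fun _ : A => (Fintype.card A : ℝ)⁻¹) := by
  constructor
  · intro a; positivity
  · show ∑ _a : A, (Fintype.card A : ℝ)⁻¹ = 1
    rw [Finset.sum_const, card_univ, nsmul_eq_mul, mul_inv_cancel₀]
    exact_mod_cast Fintype.card_ne_zero

lemma pointmass_isPMF {A : Type*} [Fintype A] [DecidableEq A] (a0 : A) :
    IsPMF (fun a : A => if a = a0 then (1:ℝ) else 0) := by
  constructor
  · intro a; dsimp only; split <;> norm_num
  · simp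

end AuxLemmas

/-- Theorem 1: the capacity of the two-hop half-duplex relay channel,
`sup_p min{ I(X1;Y1|X2), I(X2;Y2) }`, equals
`sup_{P ∈ [0,1]} min{ (1 − P)·C1, g(P) }` where `C1` is the capacity of the
source-relay channel in reception mode and
`g(P) = sup { I((1−P)·δ0 + P·v, W2) : v PMF on X2 with v(0) = 0 }`. -/
theorem capacity_two_hop_HD_relay
    {X1 X2 Y1 Y2 : Type*} [Fintype X1] [Fintype X2] [Fintype Y1] [Fintype Y2]
    [DecidableEq X2] [DecidableEq Y1]
    (hX2 : 2 ≤ Fintype.card X2) (x0 : X2) (y0 : Y1)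
    (W1 : X1 → X2 → Y1 → ℝ) (hW1 : ∀ x1 x2, IsPMF (W1 x1 x2))
    (hHD : ∀ x1 x2, x2 ≠ x0 → W1 x1 x2 = fun y1 => if y1 = y0 then 1 else 0)
    (W2 : X2 → Y2 → ℝ) (hW2 : ∀ x2, IsPMF (W2 x2))
    (C1 : ℝ)
    (hC1 : C1 = sSup {r : ℝ | ∃ q : X1 → ℝ, IsPMF q ∧ r = mutInfo q (fun x1 => W1 x1 x0)})
    (g : ℝ → ℝ)
    (hg : ∀ P, g P = sSup {r : ℝ | ∃ v : X2 → ℝ, IsPMF v ∧ v x0 = 0 ∧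
      r = mutInfo (fun x2 => (1 - P) * (if x2 = x0 then 1 else 0) + P * v x2) W2}) :
    sSup {r : ℝ | ∃ p : X1 × X2 → ℝ, IsPMF p ∧
        r = min (condMI p W1) (mutInfo (marg2 p) W2)} =
    sSup {r : ℝ | ∃ P ∈ Set.Icc (0:ℝ) 1, r = min ((1 - P) * C1) (g P)} := by
  classical
  haveI hX2ne : Nonempty X2 := Fintype.card_pos_iff.mp (by omega)
  obtain ⟨x2', hx2'⟩ : ∃ b : X2, b ≠ x0 := Fintype.exists_ne_of_one_lt_card (by omega) x0
  set v0 : X2 → ℝ := fun a => if a = x2' then 1 else 0 with hv0def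
  have hv0pmf : IsPMF v0 := pointmass_isPMF x2'
  have hv0x0 : v0 x0 = 0 := by
    show (if x0 = x2' then (1:ℝ) else 0) = 0
    exact if_neg (fun h => hx2' h.symm)
  have hGne : ∀ P : ℝ, {r : ℝ | ∃ v : X2 → ℝ, IsPMF v ∧ v x0 = 0 ∧
      r = mutInfo (fun x2 => (1 - P) * (if x2 = x0 then 1 else 0) + P * v x2) W2}.Nonempty :=
    fun P => ⟨_, v0, hv0pmf, hv0x0, rfl⟩
  have hGbdd : ∀ P ∈ Set.Icc (0:ℝ) 1, BddAbove {r : ℝ | ∃ v : X2 → ℝ, IsPMF v ∧ v x0 = 0 ∧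
      r = mutInfo (fun x2 => (1 - P) * (if x2 = x0 then 1 else 0) + P * v x2) W2} := by
    intro P hP
    refine ⟨2 * Fintype.card X2, ?_⟩
    rintro r ⟨v, hv, hvx0, rfl⟩
    exact mutInfo_le _ (mix_isPMF x0 P hP.1 hP.2 v hv) W2 hW2
  have hgle : ∀ P ∈ Set.Icc (0:ℝ) 1, g P ≤ 2 * Fintype.card X2 := by
    intro P hP
    rw [hg P]
    refine csSup_le (hGne P) ?_
    rintro r ⟨v, hv, hvx0, rfl⟩
    exact mutInfo_le _ (mix_isPMF x0 P hP.1 hP.2 v hv) W2 hW2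
  have hRne : {r : ℝ | ∃ P ∈ Set.Icc (0:ℝ) 1, r = min ((1 - P) * C1) (g P)}.Nonempty :=
    ⟨_, 0, ⟨le_refl 0, zero_le_one⟩, rfl⟩
  have hRbdd : BddAbove {r : ℝ | ∃ P ∈ Set.Icc (0:ℝ) 1, r = min ((1 - P) * C1) (g P)} := by
    refine ⟨2 * Fintype.card X2, ?_⟩
    rintro r ⟨P, hP, rfl⟩
    exact le_trans (min_le_right _ _) (hgle P hP)
  have hLbdd : BddAbove {r : ℝ | ∃ p : X1 × X2 → ℝ, IsPMF p ∧
      r = min (condMI p W1) (mutInfo (marg2 p) W2)} := by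
    refine ⟨2 * Fintype.card X2, ?_⟩
    rintro r ⟨p, hp, rfl⟩
    exact le_trans (min_le_right _ _) (mutInfo_le _ (marg2_isPMF p hp) W2 hW2)
  have hS1bdd : BddAbove {r : ℝ | ∃ q : X1 → ℝ, IsPMF q ∧ r = mutInfo q (fun x1 => W1 x1 x0)} := by
    refine ⟨2 * Fintype.card X1, ?_⟩
    rintro r ⟨q, hq, rfl⟩
    exact mutInfo_le q hq _ (fun x1 => hW1 x1 x0)
  rcases isEmpty_or_nonempty X1 with hE | hNE
  · -- degenerate case: X1 empty, both sides are 0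
    have hC10 : C1 = 0 := by
      rw [hC1]
      rw [show {r : ℝ | ∃ q : X1 → ℝ, IsPMF q ∧ r = mutInfo q (fun x1 => W1 x1 x0)} = ∅ by
        ext r
        simp only [Set.mem_setOf_eq, Set.mem_empty_iff_false, iff_false, not_exists]
        rintro q ⟨hq1, hq2⟩
        have h1 := hq1.2
        rw [Finset.univ_eq_empty, Finset.sum_empty] at h1
        norm_num at h1]
      exact Real.sSup_empty
    have hLempty : {r : ℝ | ∃ p : X1 × X2 → ℝ, IsPMF p ∧
        r = min (condMI p W1) (mutInfo (marg2 p) W2)} = ∅ := by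
      ext r
      simp only [Set.mem_setOf_eq, Set.mem_empty_iff_false, iff_false, not_exists]
      rintro p ⟨hp1, hp2⟩
      have h1 := hp1.2
      rw [Finset.univ_eq_empty, Finset.sum_empty] at h1
      norm_num at h1
    have hg0 : g 0 = 0 := by
      rw [hg 0]
      have hval : ∀ r ∈ {r : ℝ | ∃ v : X2 → ℝ, IsPMF v ∧ v x0 = 0 ∧
          r = mutInfo (fun x2 => (1 - (0:ℝ)) * (if x2 = x0 then 1 else 0) + 0 * v x2) W2},
          r = 0 := by
        rintro r ⟨v, hv, hvx0, rfl⟩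
        rw [show (fun x2 => (1 - (0:ℝ)) * (if x2 = x0 then 1 else 0) + 0 * v x2)
            = fun x2 => if x2 = x0 then (1:ℝ) else 0 by funext x2; ring]
        exact mutInfo_pointmass x0 W2
      refine le_antisymm (csSup_le (hGne 0) (fun r hr => le_of_eq (hval r hr))) ?_
      refine le_csSup (hGbdd 0 ⟨le_refl 0, zero_le_one⟩) ?_
      refine ⟨v0, hv0pmf, hv0x0, ?_⟩
      rw [show (fun x2 => (1 - (0:ℝ)) * (if x2 = x0 then 1 else 0) + 0 * v0 x2)
          = fun x2 => if x2 = x0 then (1:ℝ) else 0 by funext x2; ring]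
      exact (mutInfo_pointmass x0 W2).symm
    rw [hLempty, Real.sSup_empty]
    refine (le_antisymm ?_ ?_).symm
    · refine csSup_le hRne ?_
      rintro r ⟨P, hP, rfl⟩
      have : (1 - P) * C1 = 0 := by rw [hC10, mul_zero]
      linarith [min_le_left ((1 - P) * C1) (g P)]
    · refine le_csSup hRbdd ?_
      refine ⟨0, ⟨le_refl 0, zero_le_one⟩, ?_⟩
      rw [hC10, hg0, mul_zero]
      norm_num
  · -- main case: X1 nonempty
    have hS1ne : {r : ℝ | ∃ q : X1 → ℝ, IsPMF q ∧
        r = mutInfo q (fun x1 => W1 x1 x0)}.Nonempty :=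
      ⟨_, _, unif_isPMF, rfl⟩
    have hLne : {r : ℝ | ∃ p : X1 × X2 → ℝ, IsPMF p ∧
        r = min (condMI p W1) (mutInfo (marg2 p) W2)}.Nonempty :=
      ⟨_, _, unif_isPMF, rfl⟩
    apply le_antisymm
    · -- sSup L ≤ sSup R
      refine csSup_le hLne ?_
      rintro r ⟨p, hp, rfl⟩
      have ht0 : 0 ≤ marg2 p x0 := marg2_nonneg p hp x0
      have ht1 : marg2 p x0 ≤ 1 := by
        rw [← marg2_sum p hp]
        exact Finset.single_le_sum (fun x _ => marg2_nonneg p hp x) (mem_univ x0)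
      obtain ⟨v, hv, hvx0, hm⟩ : ∃ v : X2 → ℝ, IsPMF v ∧ v x0 = 0 ∧
          (fun x2 => (1 - (1 - marg2 p x0)) * (if x2 = x0 then (1:ℝ) else 0)
            + (1 - marg2 p x0) * v x2) = marg2 p := by
        by_cases ht : marg2 p x0 = 1
        · refine ⟨v0, hv0pmf, hv0x0, ?_⟩
          have hz : ∀ x2, x2 ≠ x0 → marg2 p x2 = 0 := by
            intro x2 hx
            have hsum : ∑ y ∈ univ.erase x0, marg2 p y = 0 := by
              rw [Finset.sum_erase_eq_sub (mem_univ x0), marg2_sum p hp, ht]; ring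
            exact (Finset.sum_eq_zero_iff_of_nonneg
              (fun y _ => marg2_nonneg p hp y)).mp hsum x2
              (Finset.mem_erase.mpr ⟨hx, mem_univ x2⟩)
          funext x2
          by_cases hx : x2 = x0
          · subst hx; rw [if_pos rfl, ht]; ring
          · rw [if_neg hx, hz x2 hx, ht]; ring
        · have htlt : marg2 p x0 < 1 := lt_of_le_of_ne ht1 ht
          have hPpos : 0 < 1 - marg2 p x0 := by linarith
          refine ⟨fun x2 => if x2 = x0 then 0 else marg2 p x2 / (1 - marg2 p x0),
            ⟨?_, ?_⟩, if_pos rfl, ?_⟩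
          · intro a; dsimp only; split
            · exact le_refl 0
            · exact div_nonneg (marg2_nonneg p hp a) hPpos.le
          · rw [← Finset.sum_erase_add univ _ (mem_univ x0), if_pos rfl, add_zero]
            rw [Finset.sum_congr rfl (fun x hx =>
              if_neg (Finset.mem_erase.mp hx).1 :
              ∀ x ∈ univ.erase x0, (if x = x0 then (0:ℝ)
                else marg2 p x / (1 - marg2 p x0)) = marg2 p x / (1 - marg2 p x0))]
            rw [← Finset.sum_div, Finset.sum_erase_eq_sub (mem_univ x0), marg2_sum p hp]
            exact div_self (ne_of_gt hPpos)
          · funext x2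
            by_cases hx : x2 = x0
            · subst hx; dsimp only; rw [if_pos rfl, if_pos rfl]; ring
            · dsimp only; rw [if_neg hx, if_neg hx]
              field_simp
              ring
      have hPmem : (1 - marg2 p x0) ∈ Set.Icc (0:ℝ) 1 := ⟨by linarith, by linarith⟩
      have h2 : mutInfo (marg2 p) W2 ≤ g (1 - marg2 p x0) := by
        rw [hg]
        refine le_csSup (hGbdd _ hPmem) ?_
        exact ⟨v, hv, hvx0, congrArg (fun f => mutInfo f W2) hm.symm⟩
      have h1 : condMI p W1 ≤ (1 - (1 - marg2 p x0)) * C1 := by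
        rw [condMI_eq x0 y0 p hp W1 hHD, show (1 - (1 - marg2 p x0)) = marg2 p x0 by ring]
        by_cases hpos : 0 < marg2 p x0
        · rw [if_pos hpos]
          have hIle : mutInfo (fun x1 => p (x1, x0) / marg2 p x0)
              (fun x1 => W1 x1 x0) ≤ C1 := by
            rw [hC1]
            refine le_csSup hS1bdd ?_
            exact ⟨_, ⟨fun x1 => div_nonneg (hp.1 _) ht0,
              cond_sum p x0 (ne_of_gt hpos)⟩, rfl⟩
          exact mul_le_mul_of_nonneg_left hIle ht0
        · rw [if_neg hpos]
          rw [show marg2 p x0 = 0 from le_antisymm (not_lt.mp hpos) ht0, zero_mul]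
      calc min (condMI p W1) (mutInfo (marg2 p) W2)
          ≤ min ((1 - (1 - marg2 p x0)) * C1) (g (1 - marg2 p x0)) := min_le_min h1 h2
        _ ≤ _ := le_csSup hRbdd ⟨1 - marg2 p x0, hPmem, rfl⟩
    · -- sSup R ≤ sSup L
      refine csSup_le hRne ?_
      rintro r ⟨P, hP, rfl⟩
      refine le_of_forall_pos_le_add ?_
      intro ε hε
      obtain ⟨rq, ⟨q, hq, rfl⟩, hgtq⟩ := exists_lt_of_lt_csSup hS1ne
        (show C1 - ε < sSup {r : ℝ | ∃ q : X1 → ℝ, IsPMF q ∧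
          r = mutInfo q (fun x1 => W1 x1 x0)} by rw [← hC1]; linarith)
      obtain ⟨rv, ⟨v, hv, hvx0, rfl⟩, hgtv⟩ := exists_lt_of_lt_csSup (hGne P)
        (show g P - ε < sSup {r : ℝ | ∃ v : X2 → ℝ, IsPMF v ∧ v x0 = 0 ∧
          r = mutInfo (fun x2 => (1 - P) * (if x2 = x0 then 1 else 0) + P * v x2) W2} by
          rw [← hg]; linarith)
      set m : X2 → ℝ := fun x2 => (1 - P) * (if x2 = x0 then (1:ℝ) else 0) + P * v x2
        with hmdef
      have hmpmf : IsPMF m := mix_isPMF x0 P hP.1 hP.2 v hv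
      set pp : X1 × X2 → ℝ := fun x => m x.2 * q x.1 with hppdef
      have hpppmf : IsPMF pp := prod_isPMF m hmpmf q hq
      have hmarg : marg2 pp = m := marg2_prod m q hq.2
      have hmx0 : m x0 = 1 - P := by rw [hmdef]; simp [hvx0]
      have hcond : condMI pp W1 = (1 - P) * mutInfo q (fun x1 => W1 x1 x0) := by
        rw [condMI_eq x0 y0 pp hpppmf W1 hHD]
        have h0 : marg2 pp x0 = 1 - P := by rw [hmarg, hmx0]
        rw [h0]
        by_cases h1P : 0 < 1 - P
        · rw [if_pos h1P]
          have hfun : (fun x1 => pp (x1, x0) / (1 - P)) = q := by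
            funext x1
            show m x0 * q x1 / (1 - P) = q x1
            rw [hmx0, mul_comm, mul_div_assoc, div_self (ne_of_gt h1P), mul_one]
          rw [hfun]
        · rw [if_neg h1P]
          rw [show (1:ℝ) - P = 0 from le_antisymm (not_lt.mp h1P) (by linarith [hP.2]),
            zero_mul]
      have hle : min (condMI pp W1) (mutInfo (marg2 pp) W2)
          ≤ sSup {r : ℝ | ∃ p : X1 × X2 → ℝ, IsPMF p ∧
            r = min (condMI p W1) (mutInfo (marg2 p) W2)} :=
        le_csSup hLbdd ⟨pp, hpppmf, rfl⟩
      have e1 : (1 - P) * C1 - ε ≤ condMI pp W1 := by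
        rw [hcond]
        nlinarith [mul_le_mul_of_nonneg_left hgtq.le
          (by linarith [hP.2] : (0:ℝ) ≤ 1 - P), mul_nonneg hP.1 hε.le]
      have e2 : g P - ε ≤ mutInfo (marg2 pp) W2 := by
        rw [hmarg]; exact hgtv.le
      have hminle : min ((1 - P) * C1) (g P) - ε
          ≤ min (condMI pp W1) (mutInfo (marg2 pp) W2) := by
        refine le_min ?_ ?_
        · linarith [min_le_left ((1 - P) * C1) (g P)]
        · linarith [min_le_right ((1 - P) * C1) (g P)]
      linarith
end

section
/- The constrained relay-destination rate is concave in the transmission probability: in the half-duplex two-hop relay setting, the function g : [0,1] → ℝ defined by g(P) := sup over PMFs q on X2 with q(0) = 1 − P of I(q, W2) is concave on [0,1]. -/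
open Finset

/-- Decomposition of mutual information: linear term plus output entropy. -/
lemma mutInfo_eq_decomp {A B : Type*} [Fintype A] [Fintype B]
    (p : A → ℝ) (W : A → B → ℝ) (hp : ∀ a, 0 ≤ p a) (hW : ∀ a b, 0 ≤ W a b) :
    mutInfo p W = (∑ a, p a * ∑ b, W a b * Real.logb 2 (W a b))
      + ∑ b, Real.negMulLog (∑ a, p a * W a b) / Real.log 2 := by
  have hstep : ∀ b, Real.negMulLog (∑ a, p a * W a b) / Real.log 2
      = ∑ a, p a * W a b * (-(Real.logb 2 (∑ a', p a' * W a' b))) := by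
    intro b
    rw [Real.negMulLog, Real.logb, ← Finset.sum_mul]
    ring
  simp only [hstep]
  rw [Finset.sum_comm (s := (Finset.univ : Finset B)) (t := (Finset.univ : Finset A))]
  simp only [Finset.mul_sum, ← Finset.sum_add_distrib]
  rw [mutInfo]
  refine Finset.sum_congr rfl fun a _ => Finset.sum_congr rfl fun b _ => ?_
  by_cases h : p a * W a b = 0
  · rw [if_pos h]
    rcases mul_eq_zero.1 h with h0 | h0 <;> simp [h0]
  · rw [if_neg h]
    have hpa : 0 < p a := lt_of_le_of_ne (hp a) (fun e => h (by rw [← e]; ring))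
    have hWab : W a b ≠ 0 := fun e => h (by rw [e, mul_zero])
    have hS : 0 < ∑ a', p a' * W a' b :=
      lt_of_lt_of_le (lt_of_le_of_ne (mul_nonneg (hp a) (hW a b)) (Ne.symm h))
        (Finset.single_le_sum (fun i _ => mul_nonneg (hp i) (hW i b)) (Finset.mem_univ a))
    rw [Real.logb_div hWab hS.ne']
    ring

/-- Concavity of mutual information in the input distribution. -/
lemma mutInfo_concave {A B : Type*} [Fintype A] [Fintype B]
    (W : A → B → ℝ) (hW : ∀ a b, 0 ≤ W a b)
    (q1 q2 : A → ℝ) (h1 : ∀ a, 0 ≤ q1 a) (h2 : ∀ a, 0 ≤ q2 a)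
    (t s : ℝ) (ht : 0 ≤ t) (hs : 0 ≤ s) (hts : t + s = 1) :
    t * mutInfo q1 W + s * mutInfo q2 W ≤ mutInfo (fun a => t * q1 a + s * q2 a) W := by
  have hq : ∀ a, 0 ≤ t * q1 a + s * q2 a := fun a =>
    add_nonneg (mul_nonneg ht (h1 a)) (mul_nonneg hs (h2 a))
  rw [mutInfo_eq_decomp q1 W h1 hW, mutInfo_eq_decomp q2 W h2 hW,
    mutInfo_eq_decomp _ W hq hW]
  have hlin : ∑ a, (t * q1 a + s * q2 a) * ∑ b, W a b * Real.logb 2 (W a b)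
      = t * ∑ a, q1 a * ∑ b, W a b * Real.logb 2 (W a b)
        + s * ∑ a, q2 a * ∑ b, W a b * Real.logb 2 (W a b) := by
    rw [Finset.mul_sum, Finset.mul_sum, ← Finset.sum_add_distrib]
    exact Finset.sum_congr rfl fun a _ => by ring
  have hent : ∀ b, t * (Real.negMulLog (∑ a, q1 a * W a b) / Real.log 2)
      + s * (Real.negMulLog (∑ a, q2 a * W a b) / Real.log 2)
      ≤ Real.negMulLog (∑ a, (t * q1 a + s * q2 a) * W a b) / Real.log 2 := by
    intro b
    have hsum : ∑ a, (t * q1 a + s * q2 a) * W a b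
        = t * ∑ a, q1 a * W a b + s * ∑ a, q2 a * W a b := by
      rw [Finset.mul_sum, Finset.mul_sum, ← Finset.sum_add_distrib]
      exact Finset.sum_congr rfl fun a _ => by ring
    have hu : (∑ a, q1 a * W a b) ∈ Set.Ici (0:ℝ) :=
      Finset.sum_nonneg fun a _ => mul_nonneg (h1 a) (hW a b)
    have hv : (∑ a, q2 a * W a b) ∈ Set.Ici (0:ℝ) :=
      Finset.sum_nonneg fun a _ => mul_nonneg (h2 a) (hW a b)
    have hc := Real.concaveOn_negMulLog.2 hu hv ht hs hts
    simp only [smul_eq_mul] at hc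
    rw [hsum]
    have hlog : (0:ℝ) < Real.log 2 := Real.log_pos one_lt_two
    have heq : t * (Real.negMulLog (∑ a, q1 a * W a b) / Real.log 2)
        + s * (Real.negMulLog (∑ a, q2 a * W a b) / Real.log 2)
        = (t * Real.negMulLog (∑ a, q1 a * W a b)
          + s * Real.negMulLog (∑ a, q2 a * W a b)) / Real.log 2 := by ring
    rw [heq]
    exact div_le_div_of_nonneg_right hc hlog.le |>.trans_eq rfl
  calc t * ((∑ a, q1 a * ∑ b, W a b * Real.logb 2 (W a b))
          + ∑ b, Real.negMulLog (∑ a, q1 a * W a b) / Real.log 2)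
        + s * ((∑ a, q2 a * ∑ b, W a b * Real.logb 2 (W a b))
          + ∑ b, Real.negMulLog (∑ a, q2 a * W a b) / Real.log 2)
      = (∑ a, (t * q1 a + s * q2 a) * ∑ b, W a b * Real.logb 2 (W a b))
        + ∑ b, (t * (Real.negMulLog (∑ a, q1 a * W a b) / Real.log 2)
          + s * (Real.negMulLog (∑ a, q2 a * W a b) / Real.log 2)) := by
        rw [hlin, Finset.sum_add_distrib, ← Finset.mul_sum, ← Finset.mul_sum]; ring
    _ ≤ _ := by
        exact add_le_add le_rfl (Finset.sum_le_sum fun b _ => hent b)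

/-- `negMulLog x ≤ 1` for nonnegative `x`. -/
lemma negMulLog_le_one {x : ℝ} (hx : 0 ≤ x) : Real.negMulLog x ≤ 1 := by
  rcases eq_or_lt_of_le hx with h | h
  · simp [← h]
  · have := Real.log_le_sub_one_of_pos (inv_pos.2 h)
    rw [Real.log_inv] at this
    have hx' := h.le
    rw [Real.negMulLog]
    nlinarith [mul_le_mul_of_nonneg_left this h.le, mul_inv_cancel₀ h.ne']

/-- Mutual information is bounded above. -/
lemma mutInfo_le_bound {A B : Type*} [Fintype A] [Fintype B]
    (W : A → B → ℝ) (hW : ∀ a, IsPMF (W a)) (q : A → ℝ) (hq : IsPMF q) :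
    mutInfo q W ≤ (Fintype.card A : ℝ) / Real.log 2 := by
  have hlog : (0:ℝ) < Real.log 2 := Real.log_pos one_lt_two
  have hterm : ∀ a b, (if q a * W a b = 0 then (0:ℝ)
      else q a * W a b * Real.logb 2 (W a b / ∑ a', q a' * W a' b))
      ≤ q a * W a b * (-(Real.logb 2 (q a))) := by
    intro a b
    by_cases h : q a * W a b = 0
    · rw [if_pos h, h, zero_mul]
    · rw [if_neg h]
      have hqa : 0 < q a := lt_of_le_of_ne (hq.1 a) (fun e => h (by rw [← e]; ring))
      have hWab : 0 < W a b := lt_of_le_of_ne ((hW a).1 b) (fun e => h (by rw [← e, mul_zero]))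
      have hS : 0 < ∑ a', q a' * W a' b :=
        lt_of_lt_of_le (mul_pos hqa hWab)
          (Finset.single_le_sum (fun i _ => mul_nonneg (hq.1 i) ((hW i).1 b))
            (Finset.mem_univ a))
      have hratio : W a b / (∑ a', q a' * W a' b) ≤ (q a)⁻¹ := by
        rw [div_le_iff₀ hS, inv_mul_eq_div, le_div_iff₀ hqa]
        have h2 : q a * W a b ≤ ∑ a', q a' * W a' b :=
          Finset.single_le_sum (f := fun a' => q a' * W a' b)
            (fun i _ => mul_nonneg (hq.1 i) ((hW i).1 b)) (Finset.mem_univ a)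
        linarith [mul_comm (W a b) (q a), h2]
      have hpos : 0 < W a b / ∑ a', q a' * W a' b := div_pos hWab hS
      have hle : Real.logb 2 (W a b / ∑ a', q a' * W a' b) ≤ Real.logb 2 (q a)⁻¹ :=
        (Real.logb_le_logb one_lt_two hpos (inv_pos.2 hqa)).2 hratio
      rw [Real.logb_inv] at hle
      exact mul_le_mul_of_nonneg_left hle (mul_nonneg hqa.le hWab.le)
  calc mutInfo q W ≤ ∑ a, ∑ b, q a * W a b * (-(Real.logb 2 (q a))) :=
        Finset.sum_le_sum fun a _ => Finset.sum_le_sum fun b _ => hterm a b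
    _ = ∑ a, Real.negMulLog (q a) / Real.log 2 := by
        refine Finset.sum_congr rfl fun a _ => ?_
        have : ∑ b, q a * W a b * (-(Real.logb 2 (q a)))
            = (q a * (-(Real.logb 2 (q a)))) * ∑ b, W a b := by
          rw [Finset.mul_sum]; exact Finset.sum_congr rfl fun b _ => by ring
        rw [this, (hW a).2, mul_one, Real.negMulLog, Real.logb]
        ring
    _ ≤ ∑ _a : A, 1 / Real.log 2 :=
        Finset.sum_le_sum fun a _ =>
          div_le_div_of_nonneg_right (negMulLog_le_one (hq.1 a)) hlog.le
    _ = (Fintype.card A : ℝ) / Real.log 2 := by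
        rw [Finset.sum_const, Finset.card_univ, nsmul_eq_mul]; ring

/-- Existence of a PMF with prescribed mass at `x0`, given at least two symbols. -/
lemma exists_pmf_with_mass {A : Type*} [Fintype A] (hA : 2 ≤ Fintype.card A)
    (x0 : A) {P : ℝ} (hP : P ∈ Set.Icc (0:ℝ) 1) :
    ∃ q : A → ℝ, IsPMF q ∧ q x0 = 1 - P := by
  classical
  obtain ⟨x1, hx1⟩ := Fintype.exists_ne_of_one_lt_card (by omega) x0
  refine ⟨fun x => (if x = x0 then 1 - P else 0) + (if x = x1 then P else 0), ⟨?_, ?_⟩, ?_⟩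
  · intro a
    have h0 := hP.1; have h1 := hP.2
    show 0 ≤ (if a = x0 then 1 - P else 0) + if a = x1 then P else 0
    split_ifs <;> linarith
  · rw [Finset.sum_add_distrib, Finset.sum_ite_eq' Finset.univ x0,
      Finset.sum_ite_eq' Finset.univ x1]
    simp
  · show (if x0 = x0 then 1 - P else 0) + (if x0 = x1 then P else 0) = 1 - P
    rw [if_pos rfl, if_neg (fun e => hx1 e.symm), add_zero]

/-- the constrained relay-destination rate
`g(P) = sup { I(q, W2) : q PMF on X2 with q(0) = 1 − P }`
is concave in the transmission probability `P` on `[0,1]`. -/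
theorem constrained_relay_destination_rate_concave
    {X2 Y2 : Type*} [Fintype X2] [Fintype Y2]
    (hX2 : 2 ≤ Fintype.card X2) (x0 : X2)
    (W2 : X2 → Y2 → ℝ) (hW2 : ∀ x2, IsPMF (W2 x2)) :
    ConcaveOn ℝ (Set.Icc (0:ℝ) 1)
      (fun P => sSup {r : ℝ | ∃ q : X2 → ℝ, IsPMF q ∧ q x0 = 1 - P ∧ r = mutInfo q W2}) := by
  set S : ℝ → Set ℝ := fun P =>
    {r : ℝ | ∃ q : X2 → ℝ, IsPMF q ∧ q x0 = 1 - P ∧ r = mutInfo q W2} with hS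
  have hbdd : ∀ P, BddAbove (S P) := by
    intro P
    refine ⟨(Fintype.card X2 : ℝ) / Real.log 2, fun r hr => ?_⟩
    obtain ⟨q, hq, _, rfl⟩ := hr
    exact mutInfo_le_bound W2 hW2 q hq
  have hne : ∀ P ∈ Set.Icc (0:ℝ) 1, (S P).Nonempty := by
    intro P hP
    obtain ⟨q, hq, hq0⟩ := exists_pmf_with_mass hX2 x0 hP
    exact ⟨mutInfo q W2, q, hq, hq0, rfl⟩
  refine ⟨convex_Icc 0 1, ?_⟩
  intro P1 hP1 P2 hP2 t s ht hs hts
  simp only [smul_eq_mul]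
  -- key inequality
  have key : ∀ r1 ∈ S P1, ∀ r2 ∈ S P2, t * r1 + s * r2 ≤ sSup (S (t * P1 + s * P2)) := by
    intro r1 hr1 r2 hr2
    obtain ⟨q1, hq1, hq10, rfl⟩ := hr1
    obtain ⟨q2, hq2, hq20, rfl⟩ := hr2
    have hmem : mutInfo (fun a => t * q1 a + s * q2 a) W2 ∈ S (t * P1 + s * P2) := by
      refine ⟨fun a => t * q1 a + s * q2 a, ⟨?_, ?_⟩, ?_, rfl⟩
      · exact fun a => add_nonneg (mul_nonneg ht (hq1.1 a)) (mul_nonneg hs (hq2.1 a))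
      · rw [Finset.sum_add_distrib, ← Finset.mul_sum, ← Finset.mul_sum, hq1.2, hq2.2]
        linarith
      · show t * q1 x0 + s * q2 x0 = 1 - (t * P1 + s * P2)
        rw [hq10, hq20]; linear_combination hts
    calc t * mutInfo q1 W2 + s * mutInfo q2 W2
        ≤ mutInfo (fun a => t * q1 a + s * q2 a) W2 :=
          mutInfo_concave W2 (fun a b => (hW2 a).1 b) q1 q2 hq1.1 hq2.1 t s ht hs hts
      _ ≤ sSup (S (t * P1 + s * P2)) := le_csSup (hbdd _) hmem
  show t * sSup (S P1) + s * sSup (S P2) ≤ sSup (S (t * P1 + s * P2))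
  rcases eq_or_lt_of_le ht with ht0 | ht0
  · have hs1 : s = 1 := by linarith
    rw [← ht0, hs1]
    norm_num
  rcases eq_or_lt_of_le hs with hs0 | hs0
  · have ht1 : t = 1 := by linarith
    rw [← hs0, ht1]
    norm_num
  have h1 : sSup (S P1) ≤ (sSup (S (t * P1 + s * P2)) - s * sSup (S P2)) / t := by
    refine csSup_le (hne P1 hP1) fun r1 hr1 => ?_
    rw [le_div_iff₀ ht0]
    have h2 : sSup (S P2) ≤ (sSup (S (t * P1 + s * P2)) - t * r1) / s := by
      refine csSup_le (hne P2 hP2) fun r2 hr2 => ?_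
      rw [le_div_iff₀ hs0]
      linarith [key r1 hr1 r2 hr2]
    have h3 := (le_div_iff₀ hs0).mp h2
    linarith
  have h4 := (le_div_iff₀ ht0).mp h1
  linarith
end

section
/- Max-min optimization lemma underlying Theorem 1 (intersection case): let c > 0 and let g : [0,1] → ℝ be continuous and concave with g(0) = 0, and suppose P'' ∈ (0,1] attains the maximum of g over [0,1] and satisfies g(P'') > c·(1 − P''). Then there exists a unique P' ∈ (0, P'') with c·(1 − P') = g(P'), and sup over P ∈ [0,1] of min{ c·(1 − P), g(P) } = c·(1 − P') = g(P'). -/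
/-- max-min optimization lemma underlying Theorem 1, intersection case:
let `c > 0` and let `g : [0,1] → ℝ` be continuous and concave with `g 0 = 0`, and suppose
`P'' ∈ (0,1]` attains the maximum of `g` over `[0,1]` and satisfies `g P'' > c·(1 − P'')`.
Then there is a unique `P' ∈ (0, P'')` with `c·(1 − P') = g P'`, and
`sup_{P ∈ [0,1]} min{ c·(1 − P), g P } = c·(1 − P') = g P'`. -/
theorem maxmin_intersection_case (c : ℝ) (hc : 0 < c) (g : ℝ → ℝ)
    (hgcont : ContinuousOn g (Set.Icc (0:ℝ) 1))
    (hgconc : ConcaveOn ℝ (Set.Icc (0:ℝ) 1) g)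
    (hg0 : g 0 = 0)
    (P'' : ℝ) (hPmem : P'' ∈ Set.Ioc (0:ℝ) 1)
    (hmax : ∀ P ∈ Set.Icc (0:ℝ) 1, g P ≤ g P'')
    (hgt : c * (1 - P'') < g P'') :
    ∃ P' ∈ Set.Ioo (0:ℝ) P'',
      c * (1 - P') = g P' ∧
      (∀ Q ∈ Set.Ioo (0:ℝ) P'', c * (1 - Q) = g Q → Q = P') ∧
      sSup {r : ℝ | ∃ P ∈ Set.Icc (0:ℝ) 1, r = min (c * (1 - P)) (g P)} = c * (1 - P') := by
  obtain ⟨hP0, hP1⟩ := hPmem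
  set f : ℝ → ℝ := fun x => c * (1 - x) - g x with hf
  have hsub : Set.Icc (0:ℝ) P'' ⊆ Set.Icc (0:ℝ) 1 :=
    Set.Icc_subset_Icc le_rfl hP1
  have hfc : ContinuousOn f (Set.Icc (0:ℝ) P'') := by
    apply ContinuousOn.sub
    · exact (continuous_const.mul (continuous_const.sub continuous_id)).continuousOn
    · exact hgcont.mono hsub
  have hf0 : f 0 = c := by simp [hf, hg0]
  have hfP : f P'' < 0 := by simp [hf]; linarith
  have hmem : (0:ℝ) ∈ Set.Ioo (f P'') (f 0) := ⟨hfP, by rw [hf0]; exact hc⟩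
  have := intermediate_value_Ioo' (le_of_lt hP0) hfc hmem
  obtain ⟨P', hP'mem, hfP'⟩ := this
  have heq : c * (1 - P') = g P' := by
    have : c * (1 - P') - g P' = 0 := hfP'
    linarith
  -- key: for two zeros q < p < P'', contradiction
  have key : ∀ q p : ℝ, q ∈ Set.Ioo (0:ℝ) P'' → p ∈ Set.Ioo (0:ℝ) P'' → q < p →
      c * (1 - q) = g q → c * (1 - p) = g p → False := by
    intro q p hq hp hqp hzq hzp
    have hqP : q < P'' := hq.2
    have hpP : p < P'' := hp.2
    set a : ℝ := (P'' - p) / (P'' - q)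
    set b : ℝ := (p - q) / (P'' - q)
    have hd : 0 < P'' - q := by linarith
    have ha : 0 ≤ a := div_nonneg (by linarith) hd.le
    have hb : 0 ≤ b := div_nonneg (by linarith) hd.le
    have hab : a + b = 1 := by
      have h1 : P'' - p + (p - q) = P'' - q := by ring
      rw [← add_div, h1, div_self hd.ne']
    have hcomb : a • q + b • P'' = p := by
      simp only [a, b, smul_eq_mul]; rw [div_mul_eq_mul_div, div_mul_eq_mul_div, ← add_div, div_eq_iff hd.ne']; ring
    have hqmem : q ∈ Set.Icc (0:ℝ) 1 := hsub ⟨hq.1.le, hqP.le⟩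
    have hPmem' : P'' ∈ Set.Icc (0:ℝ) 1 := ⟨hP0.le, hP1⟩
    have hconc := hgconc.2 hqmem hPmem' ha hb hab
    rw [hcomb] at hconc
    rw [smul_eq_mul, smul_eq_mul] at hconc
    -- g p ≥ a g q + b g P''
    have haff : c * (1 - p) = a * (c * (1 - q)) + b * (c * (1 - P'')) := by
      have : a * (c * (1 - q)) + b * (c * (1 - P''))
          = c * (a + b) - c * (a * q + b * P'') := by ring
      rw [this, hab]
      have : a * q + b * P'' = p := hcomb
      rw [this]; ring
    have hbpos : 0 < b := div_pos (by linarith) hd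
    have : b * (c * (1 - P'')) < b * g P'' := by
      exact (mul_lt_mul_iff_right₀ hbpos).2 hgt
    nlinarith [hconc, haff]
  refine ⟨P', hP'mem, heq, ?_, ?_⟩
  · intro Q hQ hQeq
    rcases lt_trichotomy Q P' with h | h | h
    · exact absurd (key Q P' hQ hP'mem h hQeq heq) (fun x => x)
    · exact h
    · exact absurd (key P' Q hP'mem hQ h heq hQeq) (fun x => x)
  · -- sup claim
    have hP'mem1 : P' ∈ Set.Icc (0:ℝ) 1 := hsub ⟨hP'mem.1.le, hP'mem.2.le⟩
    -- monotone up to P''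
    have mono : ∀ x y : ℝ, 0 ≤ x → x ≤ y → y ≤ P'' → g x ≤ g y := by
      intro x y hx hxy hyP
      rcases eq_or_lt_of_le hxy with rfl | hxy
      · exact le_rfl
      set a : ℝ := (P'' - y) / (P'' - x)
      set b : ℝ := (y - x) / (P'' - x)
      have hd : 0 < P'' - x := by linarith
      have ha : 0 ≤ a := div_nonneg (by linarith) hd.le
      have hb : 0 ≤ b := div_nonneg (by linarith) hd.le
      have hab : a + b = 1 := by
        have h1 : P'' - y + (y - x) = P'' - x := by ring
        rw [← add_div, h1, div_self hd.ne']
      have hcomb : a • x + b • P'' = y := by simp only [a, b, smul_eq_mul]; rw [div_mul_eq_mul_div, div_mul_eq_mul_div, ← add_div, div_eq_iff hd.ne']; ring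
      have hxmem : x ∈ Set.Icc (0:ℝ) 1 := ⟨hx, by linarith⟩
      have hPmem' : P'' ∈ Set.Icc (0:ℝ) 1 := ⟨hP0.le, hP1⟩
      have hconc := hgconc.2 hxmem hPmem' ha hb hab
      rw [hcomb] at hconc
      rw [smul_eq_mul, smul_eq_mul] at hconc
      have hgx : g x ≤ g P'' := hmax x hxmem
      have h2 : a * g x + b * g x = g x := by rw [← add_mul, hab, one_mul]
      linarith [mul_le_mul_of_nonneg_left hgx hb]
    -- upper bound
    have hub : ∀ r ∈ {r : ℝ | ∃ P ∈ Set.Icc (0:ℝ) 1, r = min (c * (1 - P)) (g P)},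
        r ≤ c * (1 - P') := by
      rintro r ⟨P, hP, rfl⟩
      rcases le_or_gt P P' with h | h
      · have : g P ≤ g P' := mono P P' hP.1 h hP'mem.2.le
        calc min (c * (1 - P)) (g P) ≤ g P := min_le_right _ _
          _ ≤ g P' := this
          _ = c * (1 - P') := heq.symm
      · calc min (c * (1 - P)) (g P) ≤ c * (1 - P) := min_le_left _ _
          _ ≤ c * (1 - P') := by nlinarith
    have hmemS : c * (1 - P') ∈ {r : ℝ | ∃ P ∈ Set.Icc (0:ℝ) 1, r = min (c * (1 - P)) (g P)} := by
      exact ⟨P', hP'mem1, by rw [heq, min_self]⟩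
    apply le_antisymm
    · exact csSup_le ⟨_, hmemS⟩ hub
    · exact le_csSup ⟨_, hub⟩ hmemS
end

section
/- Capacity of the two-hop half-duplex relay channel with binary-symmetric links (Corollary 1): let ε1, ε2 ∈ [0,1], let X1 = X2 = Y1 = Y2 = {0,1}, let W1 be the channel with W1(·|x1, 1) the point mass at 0 and W1(y1|x1, 0) = 1 − ε1 if y1 = x1 and ε1 otherwise, and let W2(y2|x2) = 1 − ε2 if y2 = x2 and ε2 otherwise. Then sup over joint PMFs p on X1 × X2 of min{ I(X1;Y1|X2), I(X2;Y2) } = max over P ∈ [0,1] of min{ (1 − H(ε1))·(1 − P), H(ε2·(1 − 2P) + P) − H(ε2) }. -/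
open Finset

/-- The binary entropy function (in bits), with the convention `0·log2 0 = 0`. -/
noncomputable def binH (p : ℝ) : ℝ :=
  -(p * Real.logb 2 p) - (1 - p) * Real.logb 2 (1 - p)

/- ### Auxiliary lemmas -/

lemma binH_eq (p : ℝ) : binH p = Real.binEntropy p / Real.log 2 := by
  simp [binH, Real.binEntropy, Real.logb, Real.log_inv]; ring

lemma binH_nonneg {p : ℝ} (h0 : 0 ≤ p) (h1 : p ≤ 1) : 0 ≤ binH p := by
  rw [binH_eq]
  exact div_nonneg (Real.binEntropy_nonneg h0 h1) (Real.log_nonneg (by norm_num))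

lemma binH_le_one (p : ℝ) : binH p ≤ 1 := by
  rw [binH_eq, div_le_one (by positivity)]
  exact Real.binEntropy_le_log_two

lemma binH_half : binH (1/2) = 1 := by
  rw [binH_eq, show (1/2 : ℝ) = 2⁻¹ by norm_num, Real.binEntropy_two_inv,
    div_self (by positivity)]

lemma myIte2 (x y z : ℝ) : (if x = 0 ∨ y = 0 then (0:ℝ) else x * y * z) = x * y * z := by
  split
  · rcases ‹_ ∨ _› with h | h <;> simp [h]
  · rfl

lemma term_split (x y O : ℝ) (hxy : 0 ≤ x * y) (hO : x * y ≤ O) :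
    x * y * Real.logb 2 (y / O) = x * y * Real.logb 2 y - x * y * Real.logb 2 O := by
  rcases eq_or_lt_of_le hxy with h | h
  · rw [← h]; ring
  · have hy : y ≠ 0 := by rintro rfl; simp at h
    have hO' : O ≠ 0 := ne_of_gt (lt_of_lt_of_le h hO)
    rw [Real.logb_div hy hO', mul_sub]

lemma mutInfo_BSC (ε α : ℝ) (hε0 : 0 ≤ ε) (hε1 : ε ≤ 1) (hα0 : 0 ≤ α) (hα1 : α ≤ 1)
    (q : Fin 2 → ℝ) (hq0 : q 0 = 1 - α) (hq1 : q 1 = α) :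
    mutInfo q (fun x y : Fin 2 => if y = x then 1 - ε else ε)
      = binH (ε * (1 - 2*α) + α) - binH ε := by
  simp only [mutInfo, Fin.sum_univ_two, hq0, hq1]
  norm_num [myIte2]
  rw [term_split (1-α) (1-ε) _ (by nlinarith) (by nlinarith),
      term_split (1-α) ε _ (by nlinarith) (by nlinarith),
      term_split α ε _ (by nlinarith) (by nlinarith),
      term_split α (1-ε) _ (by nlinarith) (by nlinarith),
      show (1 - α) * (1 - ε) + α * ε = 1 - (ε * (1 - 2 * α) + α) from by ring,
      show (1 - α) * ε + α * (1 - ε) = ε * (1 - 2 * α) + α from by ring]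
  simp only [binH]
  ring

lemma mutInfo_const (q : Fin 2 → ℝ) (hq : q 0 + q 1 = 1) :
    mutInfo q (fun _ y : Fin 2 => if y = 0 then (1:ℝ) else 0) = 0 := by
  simp [mutInfo, Fin.sum_univ_two, hq]

/-- Corollary 1: capacity of the two-hop half-duplex relay channel whose
source-relay and relay-destination links are binary-symmetric channels with crossover
probabilities `ε1` and `ε2`:
`sup_p min{ I(X1;Y1|X2), I(X2;Y2) }
  = max_{P ∈ [0,1]} min{ (1 − H(ε1))·(1 − P), H(ε2·(1 − 2P) + P) − H(ε2) }`. -/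
theorem capacity_two_hop_HD_relay_BSC (ε1 ε2 : ℝ)
    (hε1 : ε1 ∈ Set.Icc (0:ℝ) 1) (hε2 : ε2 ∈ Set.Icc (0:ℝ) 1) :
    sSup {r : ℝ | ∃ p : Fin 2 × Fin 2 → ℝ, IsPMF p ∧
        r = min
          (condMI p (fun x1 x2 y1 : Fin 2 =>
            if x2 = 0 then (if y1 = x1 then 1 - ε1 else ε1)
            else (if y1 = 0 then 1 else 0)))
          (mutInfo (marg2 p) (fun x2 y2 : Fin 2 => if y2 = x2 then 1 - ε2 else ε2))} =
    sSup {r : ℝ | ∃ P ∈ Set.Icc (0:ℝ) 1,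
        r = min ((1 - binH ε1) * (1 - P)) (binH (ε2 * (1 - 2 * P) + P) - binH ε2)} := by
  obtain ⟨hε10, hε11⟩ := hε1
  obtain ⟨hε20, hε21⟩ := hε2
  set W1 : Fin 2 → Fin 2 → Fin 2 → ℝ := fun x1 x2 y1 =>
    if x2 = 0 then (if y1 = x1 then 1 - ε1 else ε1) else (if y1 = 0 then 1 else 0) with hW1
  set L : Set ℝ := {r : ℝ | ∃ p : Fin 2 × Fin 2 → ℝ, IsPMF p ∧
        r = min (condMI p W1)
          (mutInfo (marg2 p) (fun x2 y2 : Fin 2 => if y2 = x2 then 1 - ε2 else ε2))} with hL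
  set R : Set ℝ := {r : ℝ | ∃ P ∈ Set.Icc (0:ℝ) 1,
        r = min ((1 - binH ε1) * (1 - P)) (binH (ε2 * (1 - 2 * P) + P) - binH ε2)} with hR
  -- channel identities
  have hW1zero : (fun x1 : Fin 2 => W1 x1 0) = (fun x y : Fin 2 => if y = x then 1 - ε1 else ε1) := by
    funext x y; simp [hW1]
  have hW1one : (fun x1 : Fin 2 => W1 x1 1) = (fun _ y : Fin 2 => if y = 0 then (1:ℝ) else 0) := by
    funext x y; simp [hW1]
  -- Achievability: R ⊆ L
  have hRL : R ⊆ L := by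
    rintro r ⟨P, ⟨hP0, hP1⟩, rfl⟩
    refine ⟨fun z => (if z.2 = 0 then 1 - P else P) / 2, ⟨?_, ?_⟩, ?_⟩
    · intro z; dsimp only; split <;> linarith
    · rw [Fintype.sum_prod_type]
      simp [Fin.sum_univ_two]
      ring
    · have hm0 : marg2 (fun z : Fin 2 × Fin 2 => (if z.2 = 0 then 1 - P else P) / 2) 0 = 1 - P := by
        simp [marg2, Fin.sum_univ_two]; ring
      have hm1 : marg2 (fun z : Fin 2 × Fin 2 => (if z.2 = 0 then 1 - P else P) / 2) 1 = P := by
        simp [marg2, Fin.sum_univ_two]; ring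
      have hcond : condMI (fun z : Fin 2 × Fin 2 => (if z.2 = 0 then 1 - P else P) / 2) W1
          = (1 - binH ε1) * (1 - P) := by
        rw [condMI, Fin.sum_univ_two, hm0, hm1, hW1zero, hW1one]
        have h2 : (if 0 < P then P * mutInfo
            (fun x1 : Fin 2 => (if ((x1, (1:Fin 2)).2 = 0) then 1 - P else P) / 2 / P)
            (fun _ y : Fin 2 => if y = 0 then (1:ℝ) else 0) else 0) = 0 := by
          split
          · rename_i hP
            rw [mutInfo_const _ (by norm_num; field_simp; ring)]
            ring
          · rfl
        rw [h2, add_zero]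
        split
        · rename_i hP
          have hne : (1 - P) ≠ 0 := ne_of_gt hP
          rw [mutInfo_BSC ε1 (1/2) hε10 hε11 (by norm_num) (by norm_num)
            _ (by norm_num; field_simp) (by norm_num; field_simp)]
          rw [show ε1 * (1 - 2 * (1/2)) + 1/2 = (1/2 : ℝ) from by ring, binH_half]
          ring
        · rename_i hP
          have : P = 1 := by linarith [not_lt.mp hP]
          rw [this]; ring
      rw [hcond, mutInfo_BSC ε2 P hε20 hε21 hP0 hP1 _ (by rw [hm0]) (by rw [hm1])]
  -- Converse: every element of L is ≤ some element of R
  have hLR : ∀ r ∈ L, ∃ r' ∈ R, r ≤ r' := by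
    rintro r ⟨p, ⟨hpnn, hpsum⟩, rfl⟩
    set P : ℝ := marg2 p 1 with hPdef
    have hm0nn : 0 ≤ marg2 p 0 := by
      simp only [marg2, Fin.sum_univ_two]; exact add_nonneg (hpnn _) (hpnn _)
    have hm1nn : 0 ≤ P := by
      simp only [hPdef, marg2, Fin.sum_univ_two]; exact add_nonneg (hpnn _) (hpnn _)
    have hmsum : marg2 p 0 + P = 1 := by
      rw [Fintype.sum_prod_type] at hpsum
      simp only [Fin.sum_univ_two] at hpsum
      rw [hPdef]
      simp only [marg2, Fin.sum_univ_two]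
      linarith
    have hP1 : P ≤ 1 := by linarith
    refine ⟨_, ⟨P, ⟨hm1nn, hP1⟩, rfl⟩, ?_⟩
    have hi2 : mutInfo (marg2 p) (fun x2 y2 : Fin 2 => if y2 = x2 then 1 - ε2 else ε2)
        = binH (ε2 * (1 - 2 * P) + P) - binH ε2 :=
      mutInfo_BSC ε2 P hε20 hε21 hm1nn hP1 _ (by linarith) rfl
    have hc : condMI p W1 ≤ (1 - binH ε1) * (1 - P) := by
      rw [condMI, Fin.sum_univ_two, hW1zero, hW1one]
      have h2 : (if 0 < marg2 p 1 then marg2 p 1 * mutInfo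
          (fun x1 : Fin 2 => p (x1, 1) / marg2 p 1)
          (fun _ y : Fin 2 => if y = 0 then (1:ℝ) else 0) else 0) = 0 := by
        split
        · rename_i h
          rw [mutInfo_const]
          · ring
          · rw [← add_div, div_eq_one_iff_eq (ne_of_gt h)]
            simp [marg2, Fin.sum_univ_two]
        · rfl
      rw [h2, add_zero]
      split
      · rename_i h
        have hq1nn : 0 ≤ p (1, 0) / marg2 p 0 := div_nonneg (hpnn _) hm0nn
        have hq1le : p (1, 0) / marg2 p 0 ≤ 1 := by
          rw [div_le_one h]
          simp only [marg2, Fin.sum_univ_two]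
          linarith [hpnn (0, 0)]
        rw [mutInfo_BSC ε1 (p (1, 0) / marg2 p 0) hε10 hε11 hq1nn hq1le _
          (by rw [eq_sub_iff_add_eq, ← add_div, div_eq_one_iff_eq (ne_of_gt h)]
              simp [marg2, Fin.sum_univ_two]) rfl]
        have h1 : marg2 p 0 = 1 - P := by linarith
        rw [h1]
        have hX := binH_le_one (ε1 * (1 - 2 * (p (1, 0) / (1 - P))) + p (1, 0) / (1 - P))
        nlinarith [mul_nonneg (sub_nonneg.mpr hP1) (sub_nonneg.mpr hX)]
      · rename_i h
        have h0 : marg2 p 0 = 0 := le_antisymm (not_lt.mp h) hm0nn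
        have : P = 1 := by linarith
        rw [this]
        simp
    exact min_le_min hc (le_of_eq hi2)
  -- bounds and nonemptiness
  have hRbdd : BddAbove R := by
    refine ⟨1, ?_⟩
    rintro r ⟨P, ⟨hP0, hP1⟩, rfl⟩
    calc min ((1 - binH ε1) * (1 - P)) (binH (ε2 * (1 - 2 * P) + P) - binH ε2)
        ≤ (1 - binH ε1) * (1 - P) := min_le_left _ _
      _ ≤ 1 := by nlinarith [binH_nonneg hε10 hε11, binH_le_one ε1]
  have hLbdd : BddAbove L := by
    obtain ⟨M, hM⟩ := hRbdd
    refine ⟨M, ?_⟩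
    intro r hr
    obtain ⟨r', hr', hle⟩ := hLR r hr
    exact le_trans hle (hM hr')
  have hRne : R.Nonempty := ⟨_, ⟨0, ⟨le_refl 0, zero_le_one⟩, rfl⟩⟩
  have hLne : L.Nonempty := hRne.mono hRL
  apply le_antisymm
  · apply csSup_le hLne
    intro r hr
    obtain ⟨r', hr', hle⟩ := hLR r hr
    exact le_trans hle (le_csSup hRbdd hr')
  · exact csSup_le_csSup hLbdd hRne hRL
end
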